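/- Let δ, σ be positive integers with gcd(δ,σ) = 1 and δ < σ, and set D = σ⁴ − δ⁴. Let x, y be positive integers with x² − D·y² = 1, and let X₁, Y₁ be integers with X₁² − D·Y₁² = δ⁴. For an integer n define the rational numbers M_n = X₁·y·U_{n−1}(x) + Y₁·T_n(x), a_n = [ (σ²−δ²)(X₁ + (σ²+δ²)Y₁)·y·U_{n−1}(x) + (X₁ + (σ²−δ²)Y₁)·T_n(x) + δ² ] / (2δ²), and c_n = (σ/(2δ³))·M_n·[ (σ²X₁ + (σ⁴−δ⁴)Y₁)·y·U_{n−1}(x) + (X₁ + σ²Y₁)·T_n(x) ]. If M_n, a_n, c_n are positive integers, then S(M_n, a_n) = c_n². -/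

import Mathlib

/-- `S M a` is the sum of `M` consecutive cubes starting at `a`. -/
def S (M : ℕ) (a : ℤ) : ℤ := ∑ i ∈ Finset.range M, (a + i) ^ 3

/-- `T n x` is the `n`-th Chebyshev polynomial of the first kind evaluated at `x`. -/
noncomputable def T (n : ℤ) (x : ℤ) : ℤ := (Polynomial.Chebyshev.T ℤ n).eval x

/-- `U n x` is the `n`-th Chebyshev polynomial of the second kind evaluated at `x`. -/
noncomputable def U (n : ℤ) (x : ℤ) : ℤ := (Polynomial.Chebyshev.U ℤ n).eval x

lemma T_step (x : ℤ) (n : ℤ) : T (n + 1) x = x * T n x - (1 - x ^ 2) * U (n - 1) x := by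
  have h := Polynomial.Chebyshev.T_eq_X_mul_T_sub_pol_U ℤ (n - 1)
  have h2 := congrArg (Polynomial.eval x) h
  simp only [Polynomial.eval_mul, Polynomial.eval_sub, Polynomial.eval_one, Polynomial.eval_X,
    Polynomial.eval_pow] at h2
  unfold T U
  rw [show n + 1 = n - 1 + 2 by ring, show n = n - 1 + 1 by ring] at *
  simpa using h2

lemma U_step (x : ℤ) (n : ℤ) : U n x = x * U (n - 1) x + T n x := by
  have h := Polynomial.Chebyshev.U_eq_X_mul_U_add_T ℤ (n - 1)
  have h2 := congrArg (Polynomial.eval x) h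
  simp only [Polynomial.eval_mul, Polynomial.eval_add, Polynomial.eval_X] at h2
  unfold T U
  rw [show n = n - 1 + 1 by ring] at *
  simpa using h2

lemma pell_TU (x : ℤ) : ∀ n : ℤ, T n x ^ 2 - (x ^ 2 - 1) * U (n - 1) x ^ 2 = 1 := by
  have key : ∀ n : ℤ, T (n + 1) x ^ 2 - (x ^ 2 - 1) * U n x ^ 2
      = T n x ^ 2 - (x ^ 2 - 1) * U (n - 1) x ^ 2 := by
    intro n
    have h1 := T_step x n
    have h2 := U_step x n
    rw [h1, h2]; ring
  intro n
  induction n using Int.induction_on with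
  | zero =>
      have hT : T 0 x = 1 := by unfold T; simp [Polynomial.Chebyshev.T_zero]
      have hU : U (0 - 1) x = 0 := by
        unfold U; norm_num [Polynomial.Chebyshev.U_neg_one]
      rw [hT, hU]; ring
  | succ k ih =>
      have hk := key k
      rw [show ((k : ℤ) + 1) - 1 = (k : ℤ) by ring]
      rw [hk]; exact ih
  | pred k ih =>
      have hk := key (-(k : ℤ) - 1)
      rw [show (-(k : ℤ) - 1) + 1 = -(k : ℤ) by ring] at hk
      exact hk.symm.trans ih

lemma four_S (M : ℕ) (a : ℤ) :
    4 * S M a = ((a + M - 1) * (a + M)) ^ 2 - ((a - 1) * a) ^ 2 := by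
  induction M with
  | zero => simp [S]
  | succ k ih =>
      have : S (k + 1) a = S k a + (a + k) ^ 3 := by
        unfold S; rw [Finset.sum_range_succ]
      rw [this]
      push_cast
      push_cast at ih
      linear_combination ih

/-- General solutions: with `D = σ⁴ − δ⁴`, `(x,y)` a positive solution of the simple
Pell equation and `(X₁,Y₁)` a solution of `X² − DY² = δ⁴`, whenever the rationals
`Mₙ`, `aₙ`, `cₙ` defined from Chebyshev polynomials are positive integers, they solve
`S(Mₙ,aₙ) = cₙ²`. -/
theorem general_solutions (δ σ x y X₁ Y₁ : ℤ)
    (hδ : 0 < δ) (hσ : 0 < σ) (hgcd : Int.gcd δ σ = 1) (hlt : δ < σ)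
    (hx : 0 < x) (hy : 0 < y)
    (hPell : x ^ 2 - (σ ^ 4 - δ ^ 4) * y ^ 2 = 1)
    (hXY : X₁ ^ 2 - (σ ^ 4 - δ ^ 4) * Y₁ ^ 2 = δ ^ 4)
    (n : ℤ) (Mq aq cq : ℚ)
    (hMq : Mq = (X₁ : ℚ) * y * U (n - 1) x + Y₁ * T n x)
    (haq : aq = (((σ : ℚ) ^ 2 - δ ^ 2) * (X₁ + (σ ^ 2 + δ ^ 2) * Y₁) * y * U (n - 1) x
        + ((X₁ : ℚ) + ((σ : ℚ) ^ 2 - δ ^ 2) * Y₁) * T n x + (δ : ℚ) ^ 2) / (2 * (δ : ℚ) ^ 2))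
    (hcq : cq = ((σ : ℚ) / (2 * (δ : ℚ) ^ 3)) * Mq
        * (((σ : ℚ) ^ 2 * X₁ + ((σ : ℚ) ^ 4 - δ ^ 4) * Y₁) * y * U (n - 1) x
            + ((X₁ : ℚ) + (σ : ℚ) ^ 2 * Y₁) * T n x))
    (M : ℕ) (a c : ℤ) (hMpos : 0 < M) (hapos : 0 < a) (hcpos : 0 < c)
    (hMeq : (M : ℚ) = Mq) (haeq : (a : ℚ) = aq) (hceq : (c : ℚ) = cq) :
    S M a = c ^ 2 := by
  have hδQ : (δ : ℚ) ≠ 0 := by positivity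
  -- abbreviations
  set tq : ℚ := ((T n x : ℤ) : ℚ) with htq
  set uq : ℚ := (y : ℚ) * ((U (n - 1) x : ℤ) : ℚ) with huq
  set Nq : ℚ := (X₁ : ℚ) * tq + ((σ : ℚ) ^ 4 - (δ : ℚ) ^ 4) * (Y₁ : ℚ) * uq with hNqdef
  -- Pell identity for Chebyshev evaluated, combined with the Pell equation
  have hZ : (T n x) ^ 2 - (σ ^ 4 - δ ^ 4) * (y * U (n - 1) x) ^ 2 = 1 := by
    have h1 := pell_TU x n
    linear_combination h1 + (U (n - 1) x) ^ 2 * hPell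
  have hpellQ : tq ^ 2 - ((σ : ℚ) ^ 4 - (δ : ℚ) ^ 4) * uq ^ 2 = 1 := by
    rw [htq, huq]; exact_mod_cast hZ
  have hXYQ : (X₁ : ℚ) ^ 2 - ((σ : ℚ) ^ 4 - (δ : ℚ) ^ 4) * (Y₁ : ℚ) ^ 2 = (δ : ℚ) ^ 4 := by
    exact_mod_cast hXY
  have hMq' : (M : ℚ) = (X₁ : ℚ) * uq + (Y₁ : ℚ) * tq := by
    rw [hMeq, hMq, htq, huq]; ring
  have hN : Nq ^ 2 - ((σ : ℚ) ^ 4 - (δ : ℚ) ^ 4) * (M : ℚ) ^ 2 = (δ : ℚ) ^ 4 := by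
    rw [hMq', hNqdef]
    linear_combination ((X₁ : ℚ) ^ 2 - ((σ : ℚ) ^ 4 - (δ : ℚ) ^ 4) * (Y₁ : ℚ) ^ 2) * hpellQ
      + hXYQ
  have hA : 2 * (δ : ℚ) ^ 2 * (a : ℚ) = Nq + ((σ : ℚ) ^ 2 - (δ : ℚ) ^ 2) * (M : ℚ)
      + (δ : ℚ) ^ 2 := by
    rw [haeq, haq, hMq', hNqdef, htq, huq]
    field_simp
    ring
  have hC : 2 * (δ : ℚ) ^ 3 * (c : ℚ) = (σ : ℚ) * (M : ℚ) * (Nq + (σ : ℚ) ^ 2 * (M : ℚ)) := by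
    rw [hceq, hcq, ← hMeq, hMq', hNqdef, htq, huq]
    field_simp
    ring
  -- the scaled core identity via the computed certificate
  have hkey : 16 * (δ : ℚ) ^ 8 *
      ((((a : ℚ) + (M : ℚ) - 1) * ((a : ℚ) + (M : ℚ))) ^ 2
        - (((a : ℚ) - 1) * (a : ℚ)) ^ 2)
      = 16 * (δ : ℚ) ^ 8 * (4 * (c : ℚ) ^ 2) := by
    set m : ℚ := (M : ℚ)
    set A : ℚ := (a : ℚ)
    set C : ℚ := (c : ℚ)
    set σq : ℚ := (σ : ℚ)
    set δq : ℚ := (δ : ℚ)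
    linear_combination
      (-16*m^2*δq^6 - 8*m^2*σq^2*δq^4 + 16*m^3*δq^6 + 8*m^3*σq^2*δq^4 + 8*m^3*σq^4*δq^2
        - 8*Nq*m*δq^4 + 8*Nq*m^2*δq^4 + 16*Nq*m^2*σq^2*δq^2 + 8*Nq^2*m*δq^2
        - 32*A*m*δq^6 + 32*A*m^2*δq^6 + 16*A*m^2*σq^2*δq^4 + 16*A*Nq*m*δq^4
        + 32*A^2*m*δq^6) * hA
      + (-16*m^2*σq^3*δq^2 - 16*Nq*m*σq*δq^2 - 32*C*δq^5) * hC
      + (8*m^2*σq^2*δq^2 + 8*Nq*m*δq^2) * hN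
  have hscale : (16 * (δ : ℚ) ^ 8) ≠ 0 := by positivity
  have hQ : (((a : ℚ) + (M : ℚ) - 1) * ((a : ℚ) + (M : ℚ))) ^ 2
      - (((a : ℚ) - 1) * (a : ℚ)) ^ 2 = 4 * (c : ℚ) ^ 2 :=
    mul_left_cancel₀ hscale hkey
  have hZ2 : ((a + (M : ℤ) - 1) * (a + (M : ℤ))) ^ 2 - ((a - 1) * a) ^ 2 = 4 * c ^ 2 := by
    exact_mod_cast hQ
  have h4 := four_S M a
  omega
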